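/- Let A_0 and A_1 be traceless Hermitian 2×2 complex matrices with A_0² = A_1² = I_2. Then there exist a 2×2 unitary matrix U and an angle α ∈ [0, π/2] such that U A_x U† = cos α · σ_X + (−1)^x sin α · σ_Z for x ∈ {0,1}. -/

import Mathlib

open Matrix ComplexOrder

noncomputable section

/-- 2×2 complex matrices. -/
abbrev Mat2 := Matrix (Fin 2) (Fin 2) ℂ

/-- The Pauli matrix `σ_X`. -/
def σX : Mat2 := !![0, 1; 1, 0]

/-- The Pauli matrix `σ_Z`. -/
def σZ : Mat2 := !![1, 0; 0, -1]



/-- structure of a traceless Hermitian 2x2 matrix -/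
lemma structure_lemma (M : Mat2) (hh : M.IsHermitian) (ht : M.trace = 0) :
    ∃ (zr : ℝ) (w : ℂ), M = !![(zr:ℂ), w; starRingEnd ℂ w, -(zr:ℂ)] := by
  have h10 : M 1 0 = star (M 0 1) := by rw [← hh.apply 1 0]
  have h11 : M 1 1 = -(M 0 0) := by
    have := ht; rw [Matrix.trace_fin_two] at this; linear_combination this
  have hz : M 0 0 = ((M 0 0).re : ℂ) := ((Complex.conj_eq_iff_re).mp (hh.apply 0 0)).symm
  refine ⟨(M 0 0).re, M 0 1, ?_⟩
  ext i j
  fin_cases i <;> fin_cases j <;>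
    simp [← hz, h10, h11, Complex.star_def]

lemma exists_eigvec (M : Mat2) (hh : M.IsHermitian) (ht : M.trace = 0) (h2 : M * M = 1) :
    ∃ u : Fin 2 → ℂ, M.mulVec u = u ∧ star u ⬝ᵥ u = 1 := by
  obtain ⟨zr, w, hM⟩ := structure_lemma M hh ht
  subst hM
  have hsq00 : (zr:ℂ) * zr + w * (starRingEnd ℂ w) = 1 := by
    have := congrFun (congrFun h2 0) 0
    simpa [Matrix.mul_apply, Fin.sum_univ_two, Matrix.one_apply] using this
  have hnorm : zr * zr + Complex.normSq w = 1 := by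
    have h : ((zr * zr + Complex.normSq w : ℝ) : ℂ) = 1 := by
      push_cast
      rw [← Complex.mul_conj]
      linear_combination hsq00
    exact_mod_cast h
  by_cases hz : zr = -1
  · have hw0 : w = 0 := by
      have : Complex.normSq w = 0 := by nlinarith
      exact Complex.normSq_eq_zero.mp this
    refine ⟨![0, 1], ?_, ?_⟩
    · funext i; fin_cases i <;>
        simp [Matrix.mulVec, dotProduct, Fin.sum_univ_two, hw0, hz]
    · simp [dotProduct, Fin.sum_univ_two]
  · have hzge : -1 ≤ zr := by nlinarith [Complex.normSq_nonneg w, sq_nonneg (1+zr)]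
    have hz1 : 0 < 1 + zr := by
      rcases lt_or_eq_of_le hzge with h | h
      · linarith
      · exact absurd h.symm hz
    set d : ℝ := Real.sqrt (2 * (1 + zr)) with hd
    have hd0 : (0:ℝ) < d := Real.sqrt_pos.mpr (by linarith)
    have hd2 : (d:ℂ) * d = 2 * (1 + zr) := by
      have : d * d = 2 * (1 + zr) := Real.mul_self_sqrt (by linarith)
      exact_mod_cast this
    have hdC : (d:ℂ) ≠ 0 := by exact_mod_cast hd0.ne'
    refine ⟨![(1 + (zr:ℂ))/d, (starRingEnd ℂ w) / d], ?_, ?_⟩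
    · funext i; fin_cases i <;>
        simp only [Matrix.mulVec, dotProduct, Fin.sum_univ_two, Matrix.cons_val_zero,
          Matrix.cons_val_one, Matrix.head_cons, Matrix.cons_val', Matrix.head_fin_const,
          Matrix.empty_val', Matrix.cons_val_fin_one, Matrix.of_apply, Fin.zero_eta, Fin.mk_one]
      · field_simp
        linear_combination hsq00
      · field_simp
        ring
    · simp only [dotProduct, Fin.sum_univ_two, Pi.star_apply, Matrix.cons_val_zero,
        Matrix.cons_val_one, Matrix.head_cons, star_div₀, Complex.star_def, map_add, _root_.map_one, map_div₀,
        Complex.conj_ofReal, Complex.conj_conj]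
      field_simp
      linear_combination hsq00 - hd2

lemma pauliPair (M N : Mat2) (hMh : M.IsHermitian) (hMt : M.trace = 0) (hM2 : M * M = 1)
    (hNh : N.IsHermitian) (hN2 : N * N = 1) (hanti : M * N = -(N * M)) :
    ∃ V ∈ Matrix.unitaryGroup (Fin 2) ℂ, V * M * Vᴴ = σZ ∧ V * N * Vᴴ = σX := by
  obtain ⟨u, hu1, hu2⟩ := exists_eigvec M hMh hMt hM2
  set v : Fin 2 → ℂ := N *ᵥ u with hv
  have hMv : M *ᵥ v = -v := by
    rw [hv, Matrix.mulVec_mulVec, hanti, Matrix.neg_mulVec, ← Matrix.mulVec_mulVec, hu1]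
  have hNv : N *ᵥ v = u := by
    rw [hv, Matrix.mulVec_mulVec, hN2, Matrix.one_mulVec]
  have hstaru : star u ᵥ* M = star u := by
    conv_lhs => rw [← hu1]
    rw [Matrix.star_mulVec, hMh.eq, Matrix.vecMul_vecMul, hM2, Matrix.vecMul_one]
  have hvv : star v ⬝ᵥ v = 1 := by
    rw [hv, Matrix.star_mulVec, hNh.eq, dotProduct_mulVec, Matrix.vecMul_vecMul,
      hN2, Matrix.vecMul_one, hu2]
  have huv : star u ⬝ᵥ v = 0 := by
    have h : star u ⬝ᵥ v = -(star u ⬝ᵥ v) := by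
      conv_lhs => rw [← hstaru, ← dotProduct_mulVec, hMv, dotProduct_neg]
    have := h
    linear_combination (1/2 : ℂ) * h
  have hvu : star v ⬝ᵥ u = 0 := by
    rw [hv, Matrix.star_mulVec, hNh.eq, ← dotProduct_mulVec, ← hv]
    exact huv
  -- component expansions
  have eu2 : star (u 0) * u 0 + star (u 1) * u 1 = 1 := by
    simpa [dotProduct, Fin.sum_univ_two] using hu2
  have evv : star (v 0) * v 0 + star (v 1) * v 1 = 1 := by
    simpa [dotProduct, Fin.sum_univ_two] using hvv
  have euv : star (u 0) * v 0 + star (u 1) * v 1 = 0 := by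
    simpa [dotProduct, Fin.sum_univ_two] using huv
  have evu : star (v 0) * u 0 + star (v 1) * u 1 = 0 := by
    simpa [dotProduct, Fin.sum_univ_two] using hvu
  have em : ∀ i, M i 0 * u 0 + M i 1 * u 1 = u i := by
    intro i
    simpa [Matrix.mulVec, dotProduct, Fin.sum_univ_two] using congrFun hu1 i
  have emv : ∀ i, M i 0 * v 0 + M i 1 * v 1 = -v i := by
    intro i
    simpa [Matrix.mulVec, dotProduct, Fin.sum_univ_two] using congrFun hMv i
  have en : ∀ i, N i 0 * u 0 + N i 1 * u 1 = v i := by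
    intro i
    fin_cases i <;> simp [hv, Matrix.mulVec, dotProduct, Fin.sum_univ_two]
  have env : ∀ i, N i 0 * v 0 + N i 1 * v 1 = u i := by
    intro i
    simpa [Matrix.mulVec, dotProduct, Fin.sum_univ_two] using congrFun hNv i
  set Vh : Mat2 := !![u 0, v 0; u 1, v 1] with hVh
  have hVV : Vhᴴ * Vh = 1 := by
    ext i j
    fin_cases i <;> fin_cases j <;>
      simp only [hVh, Matrix.mul_apply, Matrix.conjTranspose_apply, Fin.sum_univ_two,
        Matrix.cons_val', Matrix.cons_val_zero, Matrix.cons_val_one, Matrix.head_cons,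
        Matrix.head_fin_const, Matrix.empty_val', Matrix.cons_val_fin_one, Matrix.of_apply,
        Matrix.one_apply_eq, Matrix.one_apply_ne, Ne, Fin.zero_eq_one_iff, Fin.one_eq_zero_iff,
        Nat.succ_ne_self, not_false_iff, Matrix.one_apply]
    · exact eu2
    · simpa using euv
    · simpa using evu
    · simpa using evv
  have hMVh : M * Vh = Vh * σZ := by
    ext i j
    fin_cases i <;> fin_cases j <;>
      simp only [hVh, σZ, Matrix.mul_apply, Fin.sum_univ_two, Matrix.cons_val',
        Matrix.cons_val_zero, Matrix.cons_val_one, Matrix.head_cons, Matrix.head_fin_const,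
        Matrix.empty_val', Matrix.cons_val_fin_one, Matrix.of_apply]
    · simpa using em 0
    · simpa using emv 0
    · simpa using em 1
    · simpa using emv 1
  have hNVh : N * Vh = Vh * σX := by
    ext i j
    fin_cases i <;> fin_cases j <;>
      simp only [hVh, σX, Matrix.mul_apply, Fin.sum_univ_two, Matrix.cons_val',
        Matrix.cons_val_zero, Matrix.cons_val_one, Matrix.head_cons, Matrix.head_fin_const,
        Matrix.empty_val', Matrix.cons_val_fin_one, Matrix.of_apply]
    · simpa using en 0
    · simpa using env 0
    · simpa using en 1
    · simpa using env 1
  refine ⟨Vhᴴ, ?_, ?_, ?_⟩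
  · rw [Matrix.mem_unitaryGroup_iff]
    simpa [Matrix.star_eq_conjTranspose] using hVV
  · rw [Matrix.conjTranspose_conjTranspose, mul_assoc, hMVh, ← mul_assoc, hVV, one_mul]
  · rw [Matrix.conjTranspose_conjTranspose, mul_assoc, hNVh, ← mul_assoc, hVV, one_mul]

lemma exists_partner (M : Mat2) (hh : M.IsHermitian) (ht : M.trace = 0) (h2 : M * M = 1) :
    ∃ N : Mat2, N.IsHermitian ∧ N.trace = 0 ∧ N * N = 1 ∧ M * N = -(N * M) := by
  obtain ⟨zr, w, hM⟩ := structure_lemma M hh ht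
  subst hM
  have hsq : (zr:ℂ) * zr + w * starRingEnd ℂ w = 1 := by
    have := congrFun (congrFun h2 0) 0
    simpa [Matrix.mul_apply, Fin.sum_univ_two, Matrix.one_apply] using this
  by_cases hw : w = 0
  · refine ⟨!![0, 1; 1, 0], ?_, ?_, ?_, ?_⟩
    · ext i j; fin_cases i <;> fin_cases j <;> simp [Matrix.conjTranspose_apply]
    · simp [Matrix.trace_fin_two]
    · ext i j; fin_cases i <;> fin_cases j <;>
        simp [Matrix.mul_apply, Fin.sum_univ_two, Matrix.one_apply]
    · ext i j; fin_cases i <;> fin_cases j <;>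
        simp [Matrix.mul_apply, Fin.sum_univ_two, hw]
  · set a : ℝ := ‖w‖ with ha
    have ha0 : 0 < a := by simpa [ha] using norm_pos_iff.mpr hw
    have haC : (a:ℂ) ≠ 0 := by exact_mod_cast ha0.ne'
    have hww : w * starRingEnd ℂ w = (a:ℂ) * a := by
      rw [Complex.mul_conj, ha, Complex.normSq_eq_norm_sq]
      push_cast
      ring
    refine ⟨!![(a:ℂ), -(zr:ℂ)*w/a; starRingEnd ℂ (-(zr:ℂ)*w/a), -(a:ℂ)], ?_, ?_, ?_, ?_⟩
    · ext i j; fin_cases i <;> fin_cases j <;>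
        simp [Matrix.conjTranspose_apply, Complex.conj_ofReal, map_div₀]
    · simp [Matrix.trace_fin_two]
    · ext i j
      fin_cases i <;> fin_cases j <;>
        simp only [Matrix.mul_apply, Fin.sum_univ_two, Matrix.cons_val', Matrix.cons_val_zero,
          Matrix.cons_val_one, Matrix.head_cons, Matrix.head_fin_const, Matrix.empty_val',
          Matrix.cons_val_fin_one, Matrix.of_apply, Matrix.one_apply, map_div₀, map_neg,
          _root_.map_mul, Complex.conj_ofReal, Complex.conj_conj, Fin.zero_eq_one_iff,
          Fin.one_eq_zero_iff, Nat.succ_ne_self, ite_false, ite_true, if_true, if_false,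
          OfNat.ofNat_ne_one, Ne, not_false_iff, Fin.zero_eta, Fin.mk_one] <;>
        field_simp <;>
        first
          | ring1
          | linear_combination (-2*(zr:ℂ))*hww
          | linear_combination ((zr:ℂ)^2 - (a:ℂ)^2)*hww + (a:ℂ)^2*hsq
    · ext i j
      fin_cases i <;> fin_cases j <;>
        simp only [Matrix.mul_apply, Fin.sum_univ_two, Matrix.cons_val', Matrix.cons_val_zero,
          Matrix.cons_val_one, Matrix.head_cons, Matrix.head_fin_const, Matrix.empty_val',
          Matrix.cons_val_fin_one, Matrix.of_apply, Matrix.neg_apply, map_div₀, map_neg,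
          _root_.map_mul, Complex.conj_ofReal, Complex.conj_conj, Fin.zero_eta, Fin.mk_one] <;>
        field_simp <;>
        first
          | ring1
          | linear_combination (-2*(zr:ℂ))*hww
          | linear_combination ((zr:ℂ)^2 - (a:ℂ)^2)*hww + (a:ℂ)^2*hsq

lemma conj_to_Z (M : Mat2) (hh : M.IsHermitian) (ht : M.trace = 0) (h2 : M * M = 1) :
    ∃ V ∈ Matrix.unitaryGroup (Fin 2) ℂ, V * M * Vᴴ = σZ := by
  obtain ⟨N, hNh, hNt, hN2, hanti⟩ := exists_partner M hh ht h2
  obtain ⟨V, hV, h1, -⟩ := pauliPair M N hh ht h2 hNh hN2 hanti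
  exact ⟨V, hV, h1⟩

lemma conj_to_X (M : Mat2) (hh : M.IsHermitian) (ht : M.trace = 0) (h2 : M * M = 1) :
    ∃ V ∈ Matrix.unitaryGroup (Fin 2) ℂ, V * M * Vᴴ = σX := by
  obtain ⟨N, hNh, hNt, hN2, hanti⟩ := exists_partner M hh ht h2
  obtain ⟨V, hV, -, h2'⟩ := pauliPair N M hNh hNt hN2 hh h2 (by rw [hanti, neg_neg])
  exact ⟨V, hV, h2'⟩

lemma sq_structure (zr : ℝ) (w : ℂ) :
    (!![(zr:ℂ), w; starRingEnd ℂ w, -(zr:ℂ)] : Mat2) * !![(zr:ℂ), w; starRingEnd ℂ w, -(zr:ℂ)]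
      = ((zr^2 + Complex.normSq w : ℝ) : ℂ) • (1 : Mat2) := by
  have hn : ((Complex.normSq w : ℝ) : ℂ) = ((‖w‖:ℝ):ℂ)^2 := by
    rw [Complex.normSq_eq_norm_sq]; push_cast; ring
  ext i j
  fin_cases i <;> fin_cases j <;>
    simp [Matrix.mul_apply, Fin.sum_univ_two, Matrix.one_apply, Complex.mul_conj,
      Complex.mul_conj', Matrix.smul_apply] <;>
    first
      | (push_cast; ring1)
      | linear_combination Complex.mul_conj' w - hn
      | linear_combination Complex.mul_conj' w + hn

/-- any pair of traceless Hermitian involutions `A_0, A_1` on `ℂ²`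
is simultaneously unitarily equivalent to
`cos α σ_X + (−1)^x sin α σ_Z` for some `α ∈ [0, π/2]`. -/
theorem stmt8 (A : Fin 2 → Mat2)
    (hherm : ∀ x, (A x).IsHermitian)
    (htraceless : ∀ x, (A x).trace = 0)
    (hsq : ∀ x, A x * A x = 1) :
    ∃ U : Mat2, U ∈ Matrix.unitaryGroup (Fin 2) ℂ ∧
      ∃ α : ℝ, α ∈ Set.Icc 0 (Real.pi / 2) ∧
        ∀ x : Fin 2, U * A x * Uᴴ
          = ((Real.cos α : ℝ) : ℂ) • σX
            + ((-1 : ℂ) ^ ((x : ℕ)) * ((Real.sin α : ℝ) : ℂ)) • σZ := by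
  set B : Mat2 := A 0 + A 1 with hBdef
  set C : Mat2 := A 0 - A 1 with hCdef
  have hBh : B.IsHermitian := (hherm 0).add (hherm 1)
  have hCh : C.IsHermitian := (hherm 0).sub (hherm 1)
  have hBt : B.trace = 0 := by
    rw [hBdef, Matrix.trace_add, htraceless 0, htraceless 1, add_zero]
  have hCt : C.trace = 0 := by
    rw [hCdef, Matrix.trace_sub, htraceless 0, htraceless 1, sub_zero]
  have hBC : B * C = A 1 * A 0 - A 0 * A 1 := by
    rw [hBdef, hCdef, add_mul, mul_sub, mul_sub, hsq 0, hsq 1]; abel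
  have hCB : C * B = A 0 * A 1 - A 1 * A 0 := by
    rw [hBdef, hCdef, sub_mul, mul_add, mul_add, hsq 0, hsq 1]; abel
  have hanti : C * B = -(B * C) := by rw [hBC, hCB]; abel
  obtain ⟨b, wb, hB⟩ := structure_lemma B hBh hBt
  obtain ⟨c, wc, hC⟩ := structure_lemma C hCh hCt
  set βr : ℝ := b^2 + Complex.normSq wb with hβ
  set γr : ℝ := c^2 + Complex.normSq wc with hγ
  have hβ0 : 0 ≤ βr := add_nonneg (sq_nonneg b) (Complex.normSq_nonneg wb)
  have hγ0 : 0 ≤ γr := add_nonneg (sq_nonneg c) (Complex.normSq_nonneg wc)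
  have hBB : B * B = ((βr : ℝ) : ℂ) • (1 : Mat2) := by rw [hB]; exact sq_structure b wb
  have hCC : C * C = ((γr : ℝ) : ℂ) • (1 : Mat2) := by rw [hC]; exact sq_structure c wc
  have hsum4 : βr + γr = 4 := by
    have h4 : B * B + C * C = (1:Mat2) + 1 + 1 + 1 := by
      rw [hBdef, hCdef, add_mul, mul_add, mul_add, sub_mul, mul_sub, mul_sub,
        hsq 0, hsq 1]
      abel
    rw [hBB, hCC] at h4
    have h00 := congrFun (congrFun h4 0) 0
    simp [Matrix.smul_apply, Matrix.one_apply, Matrix.add_apply] at h00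
    have : ((βr + γr : ℝ) : ℂ) = 4 := by push_cast; linear_combination h00
    exact_mod_cast this
  by_cases hγz : γr = 0
  · -- C = 0, A 1 = A 0, α = 0
    have hc0 : c = 0 ∧ wc = 0 := by
      constructor
      · nlinarith [Complex.normSq_nonneg wc, sq_nonneg c]
      · refine Complex.normSq_eq_zero.mp ?_
        nlinarith [Complex.normSq_nonneg wc, sq_nonneg c]
    have hCzero : C = 0 := by
      rw [hC, hc0.1, hc0.2]
      ext i j; fin_cases i <;> fin_cases j <;> simp
    have hA10 : A 1 = A 0 := by
      have h' := hCdef ▸ hCzero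
      rw [sub_eq_zero] at h'
      exact h'.symm
    obtain ⟨U, hU, hUX⟩ := conj_to_X (A 0) (hherm 0) (htraceless 0) (hsq 0)
    refine ⟨U, hU, 0, ⟨le_refl 0, by linarith [Real.pi_pos]⟩, ?_⟩
    have key : ∀ y : Fin 2, U * A y * Uᴴ
        = ((Real.cos 0 : ℝ) : ℂ) • σX
          + ((-1 : ℂ) ^ ((y : ℕ)) * ((Real.sin 0 : ℝ) : ℂ)) • σZ := by
      intro y
      have hy : A y = A 0 := by
        fin_cases y
        · rfl
        · exact hA10
      rw [hy, hUX]
      simp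
    exact key
  · by_cases hβz : βr = 0
    · -- B = 0, A 1 = -A 0, α = π/2
      have hb0 : b = 0 ∧ wb = 0 := by
        constructor
        · nlinarith [Complex.normSq_nonneg wb, sq_nonneg b]
        · refine Complex.normSq_eq_zero.mp ?_
          nlinarith [Complex.normSq_nonneg wb, sq_nonneg b]
      have hBzero : B = 0 := by
        rw [hB, hb0.1, hb0.2]
        ext i j; fin_cases i <;> fin_cases j <;> simp
      have hA10 : A 1 = -(A 0) := by
        have h' := hBdef ▸ hBzero
        rw [add_eq_zero_iff_neg_eq] at h'
        exact h'.symm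
      obtain ⟨U, hU, hUZ⟩ := conj_to_Z (A 0) (hherm 0) (htraceless 0) (hsq 0)
      refine ⟨U, hU, Real.pi/2, ⟨by linarith [Real.pi_pos], le_refl _⟩, ?_⟩
      have g0 : U * A 0 * Uᴴ
          = ((Real.cos (Real.pi/2) : ℝ) : ℂ) • σX
            + ((-1 : ℂ) ^ ((0 : Fin 2) : ℕ) * ((Real.sin (Real.pi/2) : ℝ) : ℂ)) • σZ := by
        rw [hUZ]; simp
      have g1 : U * A 1 * Uᴴ
          = ((Real.cos (Real.pi/2) : ℝ) : ℂ) • σX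
            + ((-1 : ℂ) ^ ((1 : Fin 2) : ℕ) * ((Real.sin (Real.pi/2) : ℝ) : ℂ)) • σZ := by
        rw [hA10]
        simp only [Matrix.mul_neg, Matrix.neg_mul]
        rw [hUZ]
        simp
      intro x
      fin_cases x
      · exact g0
      · exact g1
    · -- main case
      set sb : ℝ := Real.sqrt βr with hsb
      set sc : ℝ := Real.sqrt γr with hsc
      have hsb0 : 0 < sb := Real.sqrt_pos.mpr (lt_of_le_of_ne hβ0 (Ne.symm hβz))
      have hsc0 : 0 < sc := Real.sqrt_pos.mpr (lt_of_le_of_ne hγ0 (Ne.symm hγz))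
      have hsb2 : sb^2 = βr := Real.sq_sqrt hβ0
      have hsc2 : sc^2 = γr := Real.sq_sqrt hγ0
      have hsbC : (sb:ℂ) ≠ 0 := by exact_mod_cast hsb0.ne'
      have hscC : (sc:ℂ) ≠ 0 := by exact_mod_cast hsc0.ne'
      set M : Mat2 := ((sc:ℂ))⁻¹ • C with hMdef
      set N : Mat2 := ((sb:ℂ))⁻¹ • B with hNdef
      have hMh : M.IsHermitian := by
        rw [hMdef, Matrix.IsHermitian, Matrix.conjTranspose_smul, hCh.eq]
        congr 1
        simp [Complex.star_def, Complex.conj_ofReal, map_inv₀]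
      have hNh : N.IsHermitian := by
        rw [hNdef, Matrix.IsHermitian, Matrix.conjTranspose_smul, hBh.eq]
        congr 1
        simp [Complex.star_def, Complex.conj_ofReal, map_inv₀]
      have hMt : M.trace = 0 := by rw [hMdef, Matrix.trace_smul, hCt, smul_zero]
      have hM2 : M * M = 1 := by
        rw [hMdef, smul_mul_smul_comm, hCC, smul_smul]
        rw [show ((sc:ℂ))⁻¹ * (sc:ℂ)⁻¹ * (γr:ℂ) = 1 by
          field_simp
          rw [← hsc2]; push_cast; ring]
        simp
      have hN2 : N * N = 1 := by
        rw [hNdef, smul_mul_smul_comm, hBB, smul_smul]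
        rw [show ((sb:ℂ))⁻¹ * (sb:ℂ)⁻¹ * (βr:ℂ) = 1 by
          field_simp
          rw [← hsb2]; push_cast; ring]
        simp
      have hanti' : M * N = -(N * M) := by
        rw [hMdef, hNdef, smul_mul_smul_comm, smul_mul_smul_comm, hBC, hCB,
          mul_comm ((sc:ℂ))⁻¹ ((sb:ℂ))⁻¹, ← smul_neg, neg_sub]
      obtain ⟨V, hV, hVZ, hVX⟩ := pauliPair M N hMh hMt hM2 hNh hN2 hanti'
      have hBeq : B = (sb:ℂ) • N := by
        rw [hNdef, smul_smul, mul_inv_cancel₀ hsbC, one_smul]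
      have hCeq : C = (sc:ℂ) • M := by
        rw [hMdef, smul_smul, mul_inv_cancel₀ hscC, one_smul]
      set α : ℝ := Real.arcsin (sc / 2) with hα
      have hsc_le : sc / 2 ≤ 1 := by
        have : sc ≤ 2 := by
          have h1 : γr ≤ 4 := by linarith
          have := Real.sqrt_le_sqrt h1
          rwa [show Real.sqrt 4 = 2 by
            rw [show (4:ℝ) = 2^2 by norm_num, Real.sqrt_sq (by norm_num)]] at this
        linarith
      have hsin : Real.sin α = sc / 2 :=
        Real.sin_arcsin (by linarith) hsc_le
      have hcos : Real.cos α = sb / 2 := by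
        rw [hα, Real.cos_arcsin]
        rw [show 1 - (sc/2)^2 = (sb/2)^2 by
          rw [div_pow, div_pow, hsc2, hsb2]; linarith]
        exact Real.sqrt_sq (by positivity)
      refine ⟨V, hV, α, ⟨Real.arcsin_nonneg.mpr (by linarith),
        Real.arcsin_le_pi_div_two _⟩, ?_⟩
      intro x
      have hVB : V * B * Vᴴ = (sb:ℂ) • σX := by
        rw [hBeq, Matrix.mul_smul, Matrix.smul_mul, hVX]
      have hVC : V * C * Vᴴ = (sc:ℂ) • σZ := by
        rw [hCeq, Matrix.mul_smul, Matrix.smul_mul, hVZ]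
      have hA0 : A 0 = (2:ℂ)⁻¹ • (B + C) := by
        rw [hBdef, hCdef]
        ext i j
        simp [Matrix.add_apply, Matrix.sub_apply, Matrix.smul_apply]
        ring
      have hA1 : A 1 = (2:ℂ)⁻¹ • (B - C) := by
        rw [hBdef, hCdef]
        ext i j
        simp [Matrix.add_apply, Matrix.sub_apply, Matrix.smul_apply]
        ring
      clear_value α
      have g0 : V * A 0 * Vᴴ
          = ((Real.cos α : ℝ) : ℂ) • σX
            + ((-1 : ℂ) ^ ((0 : Fin 2) : ℕ) * ((Real.sin α : ℝ) : ℂ)) • σZ := by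
        rw [hA0, Matrix.mul_smul, Matrix.smul_mul, Matrix.mul_add, Matrix.add_mul, hVB, hVC]
        rw [hcos, hsin]
        simp only [Fin.val_zero, pow_zero, one_mul, smul_add, smul_smul]
        push_cast
        module
      have g1 : V * A 1 * Vᴴ
          = ((Real.cos α : ℝ) : ℂ) • σX
            + ((-1 : ℂ) ^ ((1 : Fin 2) : ℕ) * ((Real.sin α : ℝ) : ℂ)) • σZ := by
        rw [hA1, Matrix.mul_smul, Matrix.smul_mul, Matrix.mul_sub, Matrix.sub_mul, hVB, hVC]
        rw [hcos, hsin]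
        simp only [Fin.val_one, pow_one, smul_sub, smul_smul, neg_one_mul, neg_smul,
          sub_eq_add_neg]
        push_cast
        module
      fin_cases x
      · exact g0
      · exact g1
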